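/- Let 𝕂 = ℝ or ℂ. Let C ∈ S^{n×n}, let μ ∈ ℝ^m, and set S = C − 𝒜*(μ). Then for every Y ∈ ℳ_k (i.e. 𝒜(YY*) = b) and every X' ∈ 𝒞 (i.e. X' ⪰ 0 and 𝒜(X') = b): ⟨C, YY*⟩ − ⟨C, X'⟩ ≤ −λ_min(S)·tr(X') + ⟨SY, Y⟩. -/

import Mathlib

open scoped Matrix BigOperators ComplexOrder
open MeasureTheory ProbabilityTheory

noncomputable section

namespace SmoothedBM

variable {𝕂 : Type*} [RCLike 𝕂]

/-- Real Frobenius inner product `⟨A,B⟩ = Re tr(Aᴴ B)`. -/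
def finner {n k : ℕ} (A B : Matrix (Fin n) (Fin k) 𝕂) : ℝ :=
  RCLike.re (Matrix.trace (Aᴴ * B))

/-- Frobenius norm. -/
def fnorm {n k : ℕ} (A : Matrix (Fin n) (Fin k) 𝕂) : ℝ :=
  Real.sqrt (finner A A)

/-- Spectral (operator) norm: the largest singular value, i.e. the square root of the
largest eigenvalue of `Aᴴ * A`. -/
def opNorm {n k : ℕ} (A : Matrix (Fin n) (Fin k) 𝕂) : ℝ :=
  ⨆ i, Real.sqrt ((Matrix.isHermitian_conjTranspose_mul_self A).eigenvalues i)

/-- The `k`-th (smallest) singular value of an `n × k` matrix: the square root of the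
smallest eigenvalue of `Yᴴ * Y`.  (It is `0` when `k > n`.) -/
def sigmaLast {n k : ℕ} (Y : Matrix (Fin n) (Fin k) 𝕂) : ℝ :=
  Real.sqrt (⨅ i, (Matrix.isHermitian_conjTranspose_mul_self Y).eigenvalues i)

/-- Squared singular values of an `n × n` matrix, sorted in increasing order
(eigenvalues of `Aᴴ * A`, sorted). -/
def svSqAsc {n : ℕ} (A : Matrix (Fin n) (Fin n) 𝕂) : Fin n → ℝ := fun i =>
  (Matrix.isHermitian_conjTranspose_mul_self A).eigenvalues
    (Tuple.sort ((Matrix.isHermitian_conjTranspose_mul_self A).eigenvalues) i)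

/-- Sum of the squares of the `k` smallest singular values of an `n × n` matrix. -/
def sumSqSmallestSV {n : ℕ} (k : ℕ) (A : Matrix (Fin n) (Fin n) 𝕂) : ℝ :=
  ∑ i : Fin n, if (i : ℕ) < k then svSqAsc A i else 0

open Classical in
/-- Smallest eigenvalue of a self-adjoint matrix (junk value `0` if not self-adjoint). -/
def lambdaMin {n : ℕ} (A : Matrix (Fin n) (Fin n) 𝕂) : ℝ :=
  if hA : A.IsHermitian then ⨅ i, hA.eigenvalues i else 0

open Classical in
/-- Number of eigenvalues of a self-adjoint matrix lying in a set `I ⊆ ℝ`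
(junk value `0` if not self-adjoint). -/
def eigCountIn {n : ℕ} (A : Matrix (Fin n) (Fin n) 𝕂) (I : Set ℝ) : ℕ :=
  if hA : A.IsHermitian then (Finset.univ.filter fun i => hA.eigenvalues i ∈ I).card else 0

variable {n m k : ℕ}

/-- The constraint map `𝒜(Z)ᵢ = ⟨Aᵢ, Z⟩`. -/
def calA (A : Fin m → Matrix (Fin n) (Fin n) 𝕂) (Z : Matrix (Fin n) (Fin n) 𝕂) :
    Fin m → ℝ := fun i => finner (A i) Z

/-- The adjoint map `𝒜*(μ) = ∑ᵢ μᵢ Aᵢ`. -/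
def calAstar (A : Fin m → Matrix (Fin n) (Fin n) 𝕂) (μ : Fin m → ℝ) :
    Matrix (Fin n) (Fin n) 𝕂 := ∑ i, (μ i : 𝕂) • A i

/-- The SDP feasible set `𝒞`. -/
def SDPSet (A : Fin m → Matrix (Fin n) (Fin n) 𝕂) (b : Fin m → ℝ) :
    Set (Matrix (Fin n) (Fin n) 𝕂) :=
  {X | X.PosSemidef ∧ ∀ i, finner (A i) X = b i}

/-- The factorized feasible set `ℳ_k`. -/
def FactSet (A : Fin m → Matrix (Fin n) (Fin n) 𝕂) (b : Fin m → ℝ) (k : ℕ) :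
    Set (Matrix (Fin n) (Fin k) 𝕂) :=
  {Y | ∀ i, finner (A i) (Y * Yᴴ) = b i}

/-- The Gram matrix `G(Y)ᵢⱼ = ⟨AᵢY, AⱼY⟩`. -/
def gram (A : Fin m → Matrix (Fin n) (Fin n) 𝕂) (Y : Matrix (Fin n) (Fin k) 𝕂) :
    Matrix (Fin m) (Fin m) ℝ :=
  Matrix.of fun i j => finner (A i * Y) (A j * Y)

/-- The four Moore–Penrose identities. -/
def IsMoorePenrose {m : ℕ} (G H : Matrix (Fin m) (Fin m) ℝ) : Prop :=
  G * H * G = G ∧ H * G * H = H ∧ (G * H)ᵀ = G * H ∧ (H * G)ᵀ = H * G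

open Classical in
/-- The Moore–Penrose pseudo-inverse (the unique matrix satisfying the four
Moore–Penrose identities; junk value `0` if none exists). -/
def pinv {m : ℕ} (G : Matrix (Fin m) (Fin m) ℝ) : Matrix (Fin m) (Fin m) ℝ :=
  if h : ∃ H, IsMoorePenrose G H then h.choose else 0

/-- The matrix `S(Y) = C − 𝒜*(G(Y)† 𝒜(C Y Yᴴ))`. -/
def Smat (A : Fin m → Matrix (Fin n) (Fin n) 𝕂) (C : Matrix (Fin n) (Fin n) 𝕂)
    (Y : Matrix (Fin n) (Fin k) 𝕂) : Matrix (Fin n) (Fin n) 𝕂 :=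
  C - calAstar A (pinv (gram A Y) *ᵥ calA A (C * (Y * Yᴴ)))

/-- `Y` is an `εg`-approximate first-order stationary point of the factorized problem. -/
def IsFOSP (A : Fin m → Matrix (Fin n) (Fin n) 𝕂) (b : Fin m → ℝ)
    (C : Matrix (Fin n) (Fin n) 𝕂) (Y : Matrix (Fin n) (Fin k) 𝕂) (εg : ℝ) : Prop :=
  Y ∈ FactSet A b k ∧ fnorm ((2 : 𝕂) • (Smat A C Y * Y)) ≤ εg

/-- `Y` is an `(εg, εH)`-approximate second-order stationary point of the factorized problem. -/
def IsSOSP (A : Fin m → Matrix (Fin n) (Fin n) 𝕂) (b : Fin m → ℝ)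
    (C : Matrix (Fin n) (Fin n) 𝕂) (Y : Matrix (Fin n) (Fin k) 𝕂) (εg εH : ℝ) : Prop :=
  IsFOSP A b C Y εg ∧
    ∀ V : Matrix (Fin n) (Fin k) 𝕂, (∀ i, finner (A i * Y) V = 0) →
      -εH * (fnorm V) ^ 2 ≤ finner V (Smat A C Y * V)

/-- The smooth-manifold assumption (Assumption 1). -/
def SmoothAssumption (A : Fin m → Matrix (Fin n) (Fin n) 𝕂) (b : Fin m → ℝ) : Prop :=
  ∀ k' : ℕ, k' ≤ n → (FactSet A b k').Nonempty →
    (∀ Y ∈ FactSet A b k', LinearIndependent ℝ fun i => A i * Y) ∨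
    (∃ U : Set (Matrix (Fin n) (Fin k') 𝕂), IsOpen U ∧ FactSet A b k' ⊆ U ∧
      ∃ d : ℕ, ∀ Y ∈ U,
        Module.finrank ℝ (Submodule.span ℝ (Set.range fun i => A i * Y)) = d)

/-- A real Gaussian Wigner matrix with variance `σ²`: a random real symmetric matrix whose
on-and-above-diagonal entries are independent centered Gaussians `N(0, σ²)`. -/
structure IsRealWigner {Ω : Type*} [MeasurableSpace Ω] (μ : Measure Ω) {n : ℕ} (σ : ℝ)
    (W : Ω → Matrix (Fin n) (Fin n) ℝ) : Prop where
  symm : ∀ ω, (W ω)ᵀ = W ω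
  meas : ∀ i j, Measurable fun ω => W ω i j
  indep : iIndepFun
    (fun (p : {p : Fin n × Fin n // p.1 ≤ p.2}) ω => W ω p.val.1 p.val.2) μ
  gauss : ∀ i j : Fin n, i ≤ j →
    Measure.map (fun ω => W ω i j) μ = gaussianReal 0 ⟨σ ^ 2, sq_nonneg σ⟩

/-- The independent real coordinates of a complex Hermitian random matrix:
diagonal entries, and real/imaginary parts of the above-diagonal entries. -/
def wignerParts {Ω : Type*} {n : ℕ} (W : Ω → Matrix (Fin n) (Fin n) ℂ) :
    (Fin n ⊕ {p : Fin n × Fin n // p.1 < p.2} × Bool) → Ω → ℝ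
  | Sum.inl i => fun ω => (W ω i i).re
  | Sum.inr (p, false) => fun ω => (W ω p.val.1 p.val.2).re
  | Sum.inr (p, true) => fun ω => (W ω p.val.1 p.val.2).im

/-- A complex Gaussian Wigner matrix with variance `σ²`: a random Hermitian matrix whose
on-and-above-diagonal entries are independent, the diagonal entries being real `N(0, σ²)` and
the above-diagonal entries having independent `N(0, σ²/2)` real and imaginary parts. -/
structure IsComplexWigner {Ω : Type*} [MeasurableSpace Ω] (μ : Measure Ω) {n : ℕ} (σ : ℝ)
    (W : Ω → Matrix (Fin n) (Fin n) ℂ) : Prop where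
  herm : ∀ ω, (W ω).IsHermitian
  meas : ∀ i j, Measurable fun ω => W ω i j
  indep : iIndepFun
    (wignerParts W) μ
  diag : ∀ i : Fin n,
    Measure.map (fun ω => (W ω i i).re) μ = gaussianReal 0 ⟨σ ^ 2, sq_nonneg σ⟩
  off_re : ∀ i j : Fin n, i < j →
    Measure.map (fun ω => (W ω i j).re) μ = gaussianReal 0 ⟨σ ^ 2 / 2, by positivity⟩
  off_im : ∀ i j : Fin n, i < j →
    Measure.map (fun ω => (W ω i j).im) μ = gaussianReal 0 ⟨σ ^ 2 / 2, by positivity⟩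


section Aux

variable {𝕂 : Type*} [RCLike 𝕂] {n m k : ℕ}

lemma finner_smul_left (r : ℝ) (A B : Matrix (Fin n) (Fin n) 𝕂) :
    finner ((r : 𝕂) • A) B = r * finner A B := by
  rw [finner, finner, Matrix.conjTranspose_smul, RCLike.star_def, RCLike.conj_ofReal,
    Matrix.smul_mul, Matrix.trace_smul, smul_eq_mul, RCLike.re_ofReal_mul]

lemma finner_sum_left (s : Finset (Fin m)) (A : Fin m → Matrix (Fin n) (Fin n) 𝕂)
    (B : Matrix (Fin n) (Fin n) 𝕂) :
    finner (∑ i ∈ s, A i) B = ∑ i ∈ s, finner (A i) B := by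
  simp [finner, Matrix.conjTranspose_sum, Matrix.sum_mul, Matrix.trace_sum, map_sum]

lemma finner_calAstar (A : Fin m → Matrix (Fin n) (Fin n) 𝕂) (lam : Fin m → ℝ)
    (Z : Matrix (Fin n) (Fin n) 𝕂) :
    finner (calAstar A lam) Z = ∑ i, lam i * finner (A i) Z := by
  rw [calAstar, finner_sum_left]
  exact Finset.sum_congr rfl fun i _ => finner_smul_left _ _ _

lemma finner_sub_left (A B Z : Matrix (Fin n) (Fin n) 𝕂) :
    finner (A - B) Z = finner A Z - finner B Z := by
  simp [finner, Matrix.conjTranspose_sub, Matrix.sub_mul]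

lemma calAstar_isHermitian (A : Fin m → Matrix (Fin n) (Fin n) 𝕂)
    (hA : ∀ i, (A i).IsHermitian) (lam : Fin m → ℝ) :
    (calAstar A lam).IsHermitian := by
  show (∑ i, (lam i : 𝕂) • A i)ᴴ = _
  rw [Matrix.conjTranspose_sum]
  refine Finset.sum_congr rfl fun i _ => ?_
  rw [Matrix.conjTranspose_smul, (hA i).eq, RCLike.star_def, RCLike.conj_ofReal]

lemma finner_mul_right (S : Matrix (Fin n) (Fin n) 𝕂) (Y : Matrix (Fin n) (Fin k) 𝕂) :
    finner S (Y * Yᴴ) = finner (S * Y) Y := by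
  unfold finner
  rw [Matrix.conjTranspose_mul, ← Matrix.mul_assoc, Matrix.trace_mul_comm (Sᴴ * Y) Yᴴ,
    ← Matrix.mul_assoc]

/-- Key spectral inequality: `λmin(S)·tr(X') ≤ ⟨S, X'⟩` for Hermitian `S` and PSD `X'`. -/
lemma lambdaMin_trace_le (hn : 0 < n) (S : Matrix (Fin n) (Fin n) 𝕂)
    (hS : S.IsHermitian) (X' : Matrix (Fin n) (Fin n) 𝕂) (hX' : X'.PosSemidef) :
    lambdaMin S * RCLike.re (Matrix.trace X') ≤ finner S X' := by
  have : Nonempty (Fin n) := ⟨⟨0, hn⟩⟩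
  set U : Matrix (Fin n) (Fin n) 𝕂 := ((Matrix.IsHermitian.eigenvectorUnitary hS : Matrix.unitaryGroup (Fin n) 𝕂) : Matrix (Fin n) (Fin n) 𝕂)
  set M : Matrix (Fin n) (Fin n) 𝕂 := star U * X' * U with hM
  have hMps : M.PosSemidef := hX'.conjTranspose_mul_mul_same U
  have hMdiag : ∀ i, 0 ≤ RCLike.re (M i i) := by
    intro i
    have := hMps.re_dotProduct_nonneg (Pi.single i 1)
    simpa [dotProduct, Matrix.mulVec, Pi.single_apply, Finset.sum_ite_eq,
      Finset.sum_ite_eq'] using this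
  -- trace X' = trace M
  have hUU : U * star U = 1 :=
    Matrix.mem_unitaryGroup_iff.mp (Matrix.IsHermitian.eigenvectorUnitary hS).2
  have htr : Matrix.trace X' = Matrix.trace M := by
    rw [hM, Matrix.trace_mul_cycle, hUU, one_mul]
  -- trace (S * X') = trace (diagonal eigs * M)
  have hSX : Matrix.trace (S * X') =
      Matrix.trace (Matrix.diagonal (RCLike.ofReal ∘ hS.eigenvalues) * M) := by
    conv_lhs => rw [hS.spectral_theorem, Unitary.conjStarAlgAut_apply]
    rw [hM, Matrix.mul_assoc, Matrix.mul_assoc, Matrix.trace_mul_comm, Matrix.mul_assoc]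
  have hfin : finner S X' = ∑ i, hS.eigenvalues i * RCLike.re (M i i) := by
    rw [finner, hS.eq, hSX, Matrix.trace]
    simp only [Matrix.diag_apply, Matrix.mul_apply, Matrix.diagonal_apply, Function.comp_apply]
    rw [map_sum]
    refine Finset.sum_congr rfl fun i _ => ?_
    rw [Finset.sum_eq_single i (by intro b _ hb; simp [hb.symm]) (by simp)]
    simp [RCLike.re_ofReal_mul]
  have htr' : RCLike.re (Matrix.trace X') = ∑ i, RCLike.re (M i i) := by
    rw [htr, Matrix.trace]; simp [map_sum]
  have hlam : ∀ i, lambdaMin S ≤ hS.eigenvalues i := by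
    intro i
    rw [lambdaMin, dif_pos hS]
    exact ciInf_le (Set.Finite.bddBelow (Set.finite_range _)) i
  rw [hfin, htr', Finset.mul_sum]
  exact Finset.sum_le_sum fun i _ => mul_le_mul_of_nonneg_right (hlam i) (hMdiag i)

end Aux

/-- for `S = C − 𝒜*(μ)`, any `Y ∈ ℳ_k` and any `X' ∈ 𝒞`,
`⟨C, YY*⟩ − ⟨C, X'⟩ ≤ −λ_min(S)·tr(X') + ⟨SY, Y⟩`. -/
theorem gap_bound_via_lambdaMin
    {𝕂 : Type*} [RCLike 𝕂] {n m k : ℕ} (hn : 0 < n) (hm : 0 < m) (hk : 0 < k)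
    (A : Fin m → Matrix (Fin n) (Fin n) 𝕂) (hA : ∀ i, (A i).IsHermitian)
    (b : Fin m → ℝ)
    (C : Matrix (Fin n) (Fin n) 𝕂) (hC : C.IsHermitian) (lam : Fin m → ℝ)
    (Y : Matrix (Fin n) (Fin k) 𝕂) (hY : Y ∈ FactSet A b k)
    (X' : Matrix (Fin n) (Fin n) 𝕂) (hX' : X' ∈ SDPSet A b) :
    finner C (Y * Yᴴ) - finner C X' ≤
      -(lambdaMin (C - calAstar A lam)) * RCLike.re (Matrix.trace X') +
        finner ((C - calAstar A lam) * Y) Y := by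
  set S := C - calAstar A lam with hSdef
  have hS : S.IsHermitian := hC.sub (calAstar_isHermitian A hA lam)
  obtain ⟨hX'ps, hX'b⟩ := hX'
  -- ⟨𝒜*lam, YYᴴ⟩ = ⟨𝒜*lam, X'⟩
  have hcancel : finner (calAstar A lam) (Y * Yᴴ) = finner (calAstar A lam) X' := by
    rw [finner_calAstar, finner_calAstar]
    exact Finset.sum_congr rfl fun i _ => by rw [hY i, hX'b i]
  have hsplit : finner C (Y * Yᴴ) - finner C X' = finner S (Y * Yᴴ) - finner S X' := by
    rw [hSdef, finner_sub_left, finner_sub_left, hcancel]; ring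
  have hkey := lambdaMin_trace_le hn S hS X' hX'ps
  have hmr := finner_mul_right S Y
  rw [hsplit, ← hmr]
  nlinarith [hkey]

end SmoothedBM
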